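/- Let S ⊆ ℝⁿ be closed and C = {x ∈ ℝⁿ : αᵀx ≤ β for all (α,β) ∈ Γ} be a convex S-free set. If for every (α, β) ∈ Γ there exists x ∈ S ∩ C that exposes (α, β) with respect to C, then C is maximal S-free: for every x̄ ∉ C, the interior of conv(C ∪ {x̄}) intersects S. -/
import Mathlib


open RealInnerProductSpace

theorem exposed_maximality {n : ℕ}
    (S : Set (EuclideanSpace ℝ (Fin n))) (hSclosed : IsClosed S)
    (Γ : Set (EuclideanSpace ℝ (Fin n) × ℝ))
    (C : Set (EuclideanSpace ℝ (Fin n)))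
    (hC : C = {x | ∀ p ∈ Γ, ⟪p.1, x⟫ ≤ p.2})
    (hCconv : Convex ℝ C)
    (hfree : interior C ∩ S = ∅)
    (hexp : ∀ p ∈ Γ, ∃ x ∈ S ∩ C, ⟪p.1, x⟫ = p.2 ∧
      ∀ (γ : EuclideanSpace ℝ (Fin n)) (δ : ℝ), (γ, δ) ≠ 0 →
        (∀ z ∈ C, ⟪γ, z⟫ ≤ δ) → ⟪γ, x⟫ = δ →
        ∃ μ : ℝ, 0 < μ ∧ γ = μ • p.1 ∧ p.2 = μ * δ) :
    ∀ xbar ∉ C, (interior (convexHull ℝ (C ∪ {xbar})) ∩ S).Nonempty := by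
  intro xbar hxbar
  let E := EuclideanSpace ℝ (Fin n)
  set K := convexHull ℝ (C ∪ {xbar}) with hK
  -- find a violated inequality
  have hxbar' : ∃ p ∈ Γ, p.2 < ⟪p.1, xbar⟫ := by
    by_contra h
    push_neg at h
    exact hxbar (hC ▸ (fun p hp => h p hp))
  obtain ⟨p, hpΓ, hpv⟩ := hxbar'
  obtain ⟨x, ⟨hxS, hxC⟩, hxp, hxexp⟩ := hexp p hpΓ
  have hCK : C ⊆ K := (Set.subset_union_left).trans (subset_convexHull ℝ _)
  have hxK : x ∈ K := hCK hxC
  have hxbarK : xbar ∈ K := subset_convexHull ℝ _ (Or.inr rfl)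
  have hKconv : Convex ℝ K := convex_convexHull ℝ _
  -- key step: no nonzero valid inequality for K can be tight at x
  have key : ∀ (γ : E) (δ : ℝ), γ ≠ 0 → (∀ z ∈ K, ⟪γ, z⟫ ≤ δ) → ⟪γ, x⟫ = δ → False := by
    intro γ δ hγ hvalid htight
    have hne : (γ, δ) ≠ 0 := by
      intro h
      exact hγ (congrArg Prod.fst h)
    obtain ⟨μ, hμ, hγp, _⟩ := hxexp γ δ hne (fun z hz => hvalid z (hCK hz)) htight
    have hδ : δ = μ * p.2 := by
      rw [← htight, hγp, real_inner_smul_left, hxp]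
    have hvb : ⟪γ, xbar⟫ ≤ δ := hvalid xbar hxbarK
    rw [hγp, real_inner_smul_left, hδ] at hvb
    have : ⟪p.1, xbar⟫ ≤ p.2 := le_of_mul_le_mul_left hvb hμ
    linarith
  suffices hx : x ∈ interior K by exact ⟨x, hx, hxS⟩
  by_contra hx
  rcases Set.eq_empty_or_nonempty (interior K) with hint | hint
  · -- interior K empty: K lies in a proper affine subspace, get a nonzero γ constant on K
    have hspan : affineSpan ℝ K ≠ ⊤ := by
      intro h
      rw [← hKconv.interior_nonempty_iff_affineSpan_eq_top] at h
      exact h.ne_empty hint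
    have hdir : (affineSpan ℝ K).direction ≠ ⊤ := by
      intro h
      exact hspan ((AffineSubspace.direction_eq_top_iff_of_nonempty
        ⟨x, subset_affineSpan ℝ K hxK⟩).mp h)
    have horth : ((affineSpan ℝ K).direction)ᗮ ≠ ⊥ := by
      intro h
      exact hdir (Submodule.orthogonal_eq_bot_iff.mp h)
    obtain ⟨γ, hγmem, hγ⟩ := Submodule.exists_mem_ne_zero_of_ne_bot horth
    refine key γ ⟪γ, x⟫ hγ (fun z hz => ?_) rfl
    have hz' : z -ᵥ x ∈ (affineSpan ℝ K).direction :=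
      AffineSubspace.vsub_mem_direction (subset_affineSpan ℝ K hz) (subset_affineSpan ℝ K hxK)
    have : ⟪γ, z - x⟫ = 0 := by
      have h0 := (Submodule.mem_orthogonal _ γ).mp hγmem (z - x) hz'
      rwa [real_inner_comm] at h0
    rw [inner_sub_right] at this
    linarith
  · -- interior K nonempty: separate x from interior K
    obtain ⟨f, hf⟩ := geometric_hahn_banach_open_point (hKconv.interior) isOpen_interior hx
    obtain ⟨a, ha⟩ := hint
    set γ : E := (InnerProductSpace.toDual ℝ E).symm f with hγdef
    have hγf : ∀ y : E, ⟪γ, y⟫ = f y := fun y => by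
      rw [hγdef, InnerProductSpace.toDual_symm_apply]
    have hγ : γ ≠ 0 := by
      intro h
      have h1 := hγf a
      rw [h, inner_zero_left] at h1
      have h2 := hγf x
      rw [h, inner_zero_left] at h2
      have h3 := hf a ha
      linarith
    refine key γ (f x) hγ (fun z hz => ?_) (hγf x)
    rw [hγf z]
    -- show f z ≤ f x by moving slightly towards a ∈ interior K
    have hlim : Filter.Tendsto (fun t : ℝ => f z + t * (f a - f z)) (nhdsWithin 0 (Set.Ioi 0))
        (nhds (f z)) := by
      have : Filter.Tendsto (fun t : ℝ => f z + t * (f a - f z)) (nhds 0)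
          (nhds (f z + 0 * (f a - f z))) := by
        exact (tendsto_const_nhds.add ((continuous_id.mul continuous_const).tendsto 0))
      simpa using this.mono_left nhdsWithin_le_nhds
    refine le_of_tendsto hlim ?_
    filter_upwards [Ioc_mem_nhdsGT_of_mem (Set.mem_Ico.mpr ⟨le_refl (0:ℝ), zero_lt_one⟩)]
      with t ht
    have hmem : z + t • (a - z) ∈ interior K :=
      hKconv.add_smul_sub_mem_interior hz ha ht
    have := hf _ hmem
    rw [map_add, map_smul] at this
    simp only [map_sub, smul_eq_mul] at this
    linarith
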